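/- If f: [0,∞) → [0,∞) is nonincreasing with f(θ) = 0 for all θ ≥ Θ for some finite Θ, p is a differentiable function with p(0) = 0, c(θ) ≥ 0 satisfies ∫_z^∞ c(θ) dθ + c(z) = p'(z) for all z > 0, and a real number P satisfies P ≤ ∫₀^θ f(z) dz + f(θ) for all θ > 0, then P · ∫₀^∞ c(θ) dθ ≤ ∫₀^∞ p'(z) f(z) dz. -/

import Mathlib

open MeasureTheory

/-- The general amortization lemma underlying the analysis of Equal-Filling-OCS:
if `f : [0,∞) → [0,∞)` is nonincreasing and eventually zero, `p` is differentiable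
with `p 0 = 0`, the nonnegative coefficients `c` satisfy
`∫_z^∞ c(θ) dθ + c(z) = p'(z)` for all `z > 0`, and `P ≤ ∫₀^θ f + f(θ)` for all
`θ > 0`, then `P · ∫₀^∞ c ≤ ∫₀^∞ p'(z) f(z) dz`. -/
theorem stmt_10 (f p c : ℝ → ℝ) (P : ℝ)
    (hfpos : ∀ θ, 0 ≤ f θ)
    (hfmono : AntitoneOn f (Set.Ici 0))
    (hfzero : ∃ Θ : ℝ, ∀ θ ≥ Θ, f θ = 0)
    (hfint : IntegrableOn f (Set.Ioi 0) volume)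
    (hp : Differentiable ℝ p) (hp0 : p 0 = 0)
    (hcpos : ∀ θ > (0 : ℝ), 0 ≤ c θ)
    (hcint : IntegrableOn c (Set.Ioi 0) volume)
    (hpfint : IntegrableOn (fun z => deriv p z * f z) (Set.Ioi 0) volume)
    (hc : ∀ z > (0 : ℝ), (∫ θ in Set.Ioi z, c θ) + c z = deriv p z)
    (hP : ∀ θ > (0 : ℝ), P ≤ (∫ z in (0 : ℝ)..θ, f z) + f θ) :
    P * ∫ θ in Set.Ioi (0 : ℝ), c θ ≤ ∫ z in Set.Ioi (0 : ℝ), deriv p z * f z := by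
  set F1 : ℝ → ℝ := fun θ => ∫ z in Set.Ioo 0 θ, f z with hF1
  have hI : (0:ℝ) ≤ ∫ z in Set.Ioi (0:ℝ), f z :=
    setIntegral_nonneg measurableSet_Ioi (fun x _ => hfpos x)
  set I : ℝ := ∫ z in Set.Ioi (0:ℝ), f z with hIdef
  have hF1mono : Monotone F1 := by
    intro a b hab
    exact setIntegral_mono_set (hfint.mono_set Set.Ioo_subset_Ioi_self)
      (Filter.Eventually.of_forall fun x => hfpos x)
      (HasSubset.Subset.eventuallyLE (Set.Ioo_subset_Ioo_right hab))
  have hF1nonneg : ∀ θ, 0 ≤ F1 θ :=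
    fun θ => setIntegral_nonneg measurableSet_Ioo (fun x _ => hfpos x)
  have hF1le : ∀ θ, F1 θ ≤ I := by
    intro θ
    exact setIntegral_mono_set hfint
      (Filter.Eventually.of_forall fun x => hfpos x)
      (HasSubset.Subset.eventuallyLE Set.Ioo_subset_Ioi_self)
  have hF1meas : Measurable F1 := hF1mono.measurable
  have hfle : ∀ θ ∈ Set.Ioi (0:ℝ), f θ ≤ f 0 :=
    fun θ hθ => hfmono Set.self_mem_Ici (Set.mem_Ici.mpr (le_of_lt hθ)) (le_of_lt hθ)
  -- integrability of f·c on Ioi 0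
  have int2 : IntegrableOn (fun θ => f θ * c θ) (Set.Ioi 0) volume := by
    refine Integrable.mono (hcint.const_mul (f 0))
      (hfint.aestronglyMeasurable.mul hcint.aestronglyMeasurable) ?_
    filter_upwards [ae_restrict_mem measurableSet_Ioi] with θ hθ
    simp only [Real.norm_eq_abs, abs_mul]
    rw [abs_of_nonneg (hfpos θ), abs_of_nonneg (hfpos 0)]
    exact mul_le_mul_of_nonneg_right (hfle θ hθ) (abs_nonneg _)
  -- integrability of F1·c on Ioi 0
  have int1 : IntegrableOn (fun θ => F1 θ * c θ) (Set.Ioi 0) volume := by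
    refine Integrable.mono (hcint.const_mul I)
      ((hF1meas.aestronglyMeasurable).mul hcint.aestronglyMeasurable) ?_
    filter_upwards [ae_restrict_mem measurableSet_Ioi] with θ _
    simp only [Real.norm_eq_abs, abs_mul]
    rw [abs_of_nonneg (hF1nonneg θ), abs_of_nonneg hI]
    exact mul_le_mul_of_nonneg_right (hF1le θ) (abs_nonneg _)
  -- integrability of z ↦ f z * ∫_{Ioi z} c on Ioi 0
  have int3 : IntegrableOn (fun z => f z * ∫ θ in Set.Ioi z, c θ) (Set.Ioi 0) volume := by
    refine IntegrableOn.congr_fun (hpfint.sub int2) ?_ measurableSet_Ioi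
    intro z hz
    have h := hc z hz
    simp only [Pi.sub_apply]
    rw [← h]
    ring
  -- the Fubini step
  have key : ∫ θ in Set.Ioi (0:ℝ), F1 θ * c θ
      = ∫ z in Set.Ioi (0:ℝ), f z * ∫ θ in Set.Ioi z, c θ := by
    have hint : Integrable (Function.uncurry fun z θ => if z < θ then f z * c θ else 0)
        ((volume.restrict (Set.Ioi (0:ℝ))).prod (volume.restrict (Set.Ioi (0:ℝ)))) := by
      refine Integrable.mono (Integrable.mul_prod hfint hcint) ?_ ?_
      · have h : (Function.uncurry fun z θ => if z < θ then f z * c θ else 0)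
            = Set.indicator {q : ℝ × ℝ | q.1 < q.2} (fun q => f q.1 * c q.2) := by
          ext q
          simp [Function.uncurry, Set.indicator_apply]
        rw [h]
        exact (Integrable.mul_prod hfint hcint).aestronglyMeasurable.indicator
          (measurableSet_lt measurable_fst measurable_snd)
      · refine Filter.Eventually.of_forall fun q => ?_
        simp only [Function.uncurry]
        split_ifs
        · exact le_rfl
        · simp only [norm_zero, Real.norm_eq_abs, abs_mul]
          positivity
    have swap := integral_integral_swap hint
    calc ∫ θ in Set.Ioi (0:ℝ), F1 θ * c θ
        = ∫ θ in Set.Ioi (0:ℝ), (∫ z in Set.Ioi (0:ℝ), (if z < θ then f z * c θ else 0)) := by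
          refine (setIntegral_congr_fun measurableSet_Ioi fun θ hθ => ?_).symm
          have h : ∫ z in Set.Ioi (0:ℝ), (if z < θ then f z * c θ else 0)
              = ∫ z in Set.Ioi (0:ℝ), (Set.Iio θ).indicator (fun z => f z * c θ) z := by
            refine setIntegral_congr_fun measurableSet_Ioi fun z _ => ?_
            simp [Set.indicator_apply]
          rw [h, setIntegral_indicator measurableSet_Iio, Set.Ioi_inter_Iio,
            integral_mul_const]
      _ = ∫ z in Set.Ioi (0:ℝ), (∫ θ in Set.Ioi (0:ℝ), (if z < θ then f z * c θ else 0)) :=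
          swap.symm
      _ = ∫ z in Set.Ioi (0:ℝ), f z * ∫ θ in Set.Ioi z, c θ := by
          refine setIntegral_congr_fun measurableSet_Ioi fun z hz => ?_
          have h : ∫ θ in Set.Ioi (0:ℝ), (if z < θ then f z * c θ else 0)
              = ∫ θ in Set.Ioi (0:ℝ), (Set.Ioi z).indicator (fun θ => f z * c θ) θ := by
            refine setIntegral_congr_fun measurableSet_Ioi fun θ _ => ?_
            simp [Set.indicator_apply]
          rw [h, setIntegral_indicator measurableSet_Ioi,
            Set.inter_eq_right.mpr (Set.Ioi_subset_Ioi (le_of_lt hz)),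
            integral_const_mul]
  -- main chain
  calc P * ∫ θ in Set.Ioi (0:ℝ), c θ
      = ∫ θ in Set.Ioi (0:ℝ), P * c θ := (integral_const_mul P c).symm
    _ ≤ ∫ θ in Set.Ioi (0:ℝ), (F1 θ + f θ) * c θ := by
        refine setIntegral_mono_on (hcint.const_mul P) ?_ measurableSet_Ioi fun θ hθ => ?_
        · have h : (fun θ => (F1 θ + f θ) * c θ) = fun θ => F1 θ * c θ + f θ * c θ := by
            ext θ; ring
          rw [h]; exact int1.add int2
        · refine mul_le_mul_of_nonneg_right ?_ (hcpos θ hθ)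
          have h := hP θ hθ
          rwa [intervalIntegral.integral_of_le (le_of_lt hθ),
            integral_Ioc_eq_integral_Ioo] at h
    _ = (∫ θ in Set.Ioi (0:ℝ), F1 θ * c θ) + ∫ θ in Set.Ioi (0:ℝ), f θ * c θ := by
        rw [← integral_add int1 int2]
        refine setIntegral_congr_fun measurableSet_Ioi fun θ _ => ?_
        ring
    _ = (∫ z in Set.Ioi (0:ℝ), f z * ∫ θ in Set.Ioi z, c θ)
        + ∫ z in Set.Ioi (0:ℝ), f z * c z := by rw [key]
    _ = ∫ z in Set.Ioi (0:ℝ), (f z * (∫ θ in Set.Ioi z, c θ) + f z * c z) := by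
        rw [integral_add int3 int2]
    _ = ∫ z in Set.Ioi (0:ℝ), deriv p z * f z := by
        refine setIntegral_congr_fun measurableSet_Ioi fun z hz => ?_
        rw [← hc z hz]
        ring
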